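/- The spectral radius of the Wasserstein metric matrix Q satisfies ρ(Q) ≥ 1 + λ, for n ≥ 2. -/

import Mathlib

open Matrix

/-- The spectral radius of `Q` is at least `1 + λ` (for `n ≥ 2`). -/
theorem wasserstein_spectralRadius_lower (n : ℕ) (hn : 2 ≤ n) (l : ℝ)
    (hl : l ∈ Set.Ioo (0:ℝ) 1)
    (Q : Matrix (Fin n) (Fin n) ℝ)
    (hQ : ∀ i j : Fin n, Q i j = l ^ (Nat.dist (i : ℕ) (j : ℕ))) :
    ENNReal.ofReal (1 + l) ≤ spectralRadius ℝ Q := by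
  obtain ⟨hl0, hl1⟩ := hl
  have hsymm : Q.IsHermitian := by
    ext i j
    simp only [conjTranspose_apply, hQ, RCLike.star_def, starRingEnd_apply, star_trivial,
      Nat.dist_comm]
  have hT : (Matrix.toEuclideanLin Q).IsSymmetric :=
    (Matrix.isHermitian_iff_isSymmetric).1 hsymm
  haveI : Nontrivial (EuclideanSpace ℝ (Fin n)) := by
    refine ⟨EuclideanSpace.single ⟨0, by omega⟩ 1, 0, fun h => ?_⟩
    have := congrArg (fun v : EuclideanSpace ℝ (Fin n) => v ⟨0, by omega⟩) h
    simp at this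
  set T := Matrix.toEuclideanLin Q with hTdef
  set μ : ℝ := ⨆ x : { x : EuclideanSpace ℝ (Fin n) // x ≠ 0 },
      RCLike.re (inner ℝ (T x) (x : EuclideanSpace ℝ (Fin n)) : ℝ) / ‖(x : EuclideanSpace ℝ (Fin n))‖ ^ 2
    with hμdef
  have hev : Module.End.HasEigenvalue T μ :=
    hT.hasEigenvalue_iSup_of_finiteDimensional
  have hmem : μ ∈ spectrum ℝ Q := by
    rw [← Matrix.spectrum_toEuclideanLin (𝕜 := ℝ) (A := Q)]
    exact hev.mem_spectrum
  -- the test vector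
  set i0 : Fin n := ⟨0, by omega⟩
  set i1 : Fin n := ⟨1, by omega⟩
  have hne : i0 ≠ i1 := by simp [i0, i1, Fin.ext_iff]
  set x₀ : EuclideanSpace ℝ (Fin n) :=
    WithLp.toLp 2 (fun i => if i = i0 then (1:ℝ) else if i = i1 then 1 else 0) with hx₀def
  have hx₀i0 : x₀ i0 = 1 := by simp [hx₀def]
  have hx₀ne : x₀ ≠ 0 := by
    intro h
    have := congrArg (fun v : EuclideanSpace ℝ (Fin n) => v i0) h
    rw [hx₀i0] at this
    simpa using this
  have hsum : ∀ f : Fin n → ℝ, (∑ i, f i * x₀ i) = f i0 + f i1 := by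
    intro f
    have : ∀ i : Fin n, f i * x₀ i =
        (if i = i0 then f i0 else 0) + (if i = i1 then f i1 else 0) := by
      intro i
      simp only [hx₀def]
      by_cases h0 : i = i0
      · simp [h0, hne]
      · by_cases h1 : i = i1 <;> simp [h0, h1, hne.symm]
    rw [Finset.sum_congr rfl fun i _ => this i, Finset.sum_add_distrib,
      Finset.sum_ite_eq' _ i0, Finset.sum_ite_eq' _ i1]
    simp
  have hQ00 : Q i0 i0 = 1 := by simp [hQ, i0]
  have hQ01 : Q i0 i1 = l := by
    rw [hQ]; norm_num [i0, i1, Nat.dist]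
  have hQ10 : Q i1 i0 = l := by
    rw [hQ]; norm_num [i0, i1, Nat.dist]
  have hQ11 : Q i1 i1 = 1 := by simp [hQ, i1]
  have hmul : ∀ i : Fin n, (Q *ᵥ x₀) i = Q i i0 + Q i i1 := by
    intro i
    simpa [Matrix.mulVec, dotProduct] using hsum (fun j => Q i j)
  have hinner : (inner ℝ (T x₀) x₀ : ℝ) = 2 * (1 + l) := by
    have hTx : ⇑(T x₀ : EuclideanSpace ℝ (Fin n)) = Q *ᵥ ⇑x₀ := by
      rfl
    rw [PiLp.inner_apply]
    simp only [RCLike.inner_apply, starRingEnd_apply, star_trivial, hTx]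
    rw [show (∑ x, x₀.ofLp x * (Q *ᵥ x₀.ofLp) x) = ∑ i, (Q *ᵥ x₀.ofLp) i * x₀.ofLp i from
      Finset.sum_congr rfl fun i _ => mul_comm _ _]
    rw [hsum (fun i => (Q *ᵥ x₀) i), hmul, hmul, hQ00, hQ01, hQ10, hQ11]
    ring
  have hnorm : ‖x₀‖ ^ 2 = 2 := by
    rw [← real_inner_self_eq_norm_sq, PiLp.inner_apply]
    simp only [RCLike.inner_apply, starRingEnd_apply, star_trivial]
    rw [hsum (fun i => x₀ i)]
    simp only [hx₀def]
    simp [hne]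
    norm_num
  -- the Rayleigh quotient at x₀ equals 1 + l
  have hray : RCLike.re (inner ℝ (T x₀) (x₀ : EuclideanSpace ℝ (Fin n)) : ℝ) / ‖x₀‖ ^ 2
      = 1 + l := by
    rw [hnorm]
    simp only [RCLike.re_to_real, hinner]
    ring
  -- bounded above
  set T' := LinearMap.toContinuousLinearMap T
  have hbdd : BddAbove (Set.range fun x : { x : EuclideanSpace ℝ (Fin n) // x ≠ 0 } =>
      RCLike.re (inner ℝ (T x) (x : EuclideanSpace ℝ (Fin n)) : ℝ) / ‖(x : EuclideanSpace ℝ (Fin n))‖ ^ 2) := by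
    refine ⟨‖T'‖, ?_⟩
    rintro r ⟨⟨x, hx⟩, rfl⟩
    have hx0 : (0:ℝ) < ‖x‖ := norm_pos_iff.2 hx
    rw [div_le_iff₀ (by positivity)]
    calc RCLike.re (inner ℝ (T x) x : ℝ) ≤ ‖(inner ℝ (T x) x : ℝ)‖ := by
          simpa using Real.le_norm_self _
      _ ≤ ‖T x‖ * ‖x‖ := norm_inner_le_norm _ _
      _ = ‖T' x‖ * ‖x‖ := rfl
      _ ≤ (‖T'‖ * ‖x‖) * ‖x‖ := by
          gcongr; exact T'.le_opNorm x
      _ = ‖T'‖ * ‖x‖ ^ 2 := by ring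
  have hle : 1 + l ≤ μ := by
    rw [hμdef, ← hray]
    exact le_ciSup hbdd ⟨x₀, hx₀ne⟩
  have hμpos : 0 ≤ μ := le_trans (by linarith) hle
  calc ENNReal.ofReal (1 + l) ≤ ENNReal.ofReal μ := ENNReal.ofReal_le_ofReal hle
    _ = (‖μ‖₊ : ENNReal) := by
        rw [← Real.enorm_eq_ofReal hμpos]
        rfl
    _ ≤ spectralRadius ℝ Q := le_iSup₂ (f := fun k (_ : k ∈ spectrum ℝ Q) => (‖k‖₊ : ENNReal)) μ hmem
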